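/- Let H = l²(ℕ) with basis (e_n), and define the densely defined operator B on the finitely supported vectors by B e_{2^{m}(2n−1)} = √m · e_{2^{m−1}(2n−1)} for m ≥ 1, n ≥ 1, and B e_{2n−1} = 0 for n ≥ 1. Then its formal adjoint B* acts by B* e_{2^{m−1}(2n−1)} = √m · e_{2^{m}(2n−1)}, and on finitely supported vectors the canonical commutation relation B B* − B* B = I holds. -/

import Mathlib

noncomputable def fsBasis (n : ℕ) : ℕ →₀ ℂ := Finsupp.single (n - 1) 1

noncomputable def fsInner (x y : ℕ →₀ ℂ) : ℂ :=
  x.sum fun i c => (starRingEnd ℂ) c * y i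

lemma fsBasis_succ (j : ℕ) : fsBasis (j + 1) = Finsupp.single j 1 := by simp [fsBasis]

lemma fsInner_single_left (j : ℕ) (y : ℕ →₀ ℂ) :
    fsInner (Finsupp.single j 1) y = y j := by
  rw [fsInner, Finsupp.sum_single_index (by simp)]; simp

lemma fsInner_single_right (f : ℕ →₀ ℂ) (j : ℕ) :
    fsInner f (Finsupp.single j 1) = (starRingEnd ℂ) (f j) := by
  rw [fsInner, Finsupp.sum, Finset.sum_eq_single j]
  · simp
  · intro b _ hbj; simp [Finsupp.single_apply, Ne.symm hbj]
  · intro h; rw [Finsupp.notMem_support_iff] at h; simp [h]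

lemma fsInner_smul_right (c : ℂ) (x y : ℕ →₀ ℂ) :
    fsInner x (c • y) = c * fsInner x y := by
  rw [fsInner, fsInner, Finsupp.mul_sum]
  refine Finsupp.sum_congr ?_
  intro i _
  rw [Finsupp.smul_apply, smul_eq_mul]; ring

lemma fsInner_zero_right (x : ℕ →₀ ℂ) : fsInner x 0 = 0 := by
  simp [fsInner]

lemma two_pow_odd_uniq : ∀ p q x y : ℕ, ¬ 2 ∣ x → ¬ 2 ∣ y →
    2 ^ p * x = 2 ^ q * y → p = q ∧ x = y := by
  intro p
  induction p with
  | zero =>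
    intro q x y hx hy h
    cases q with
    | zero => simp at h; exact ⟨rfl, h⟩
    | succ q =>
      exfalso; apply hx
      rw [pow_zero, one_mul, pow_succ] at h
      exact ⟨2 ^ q * y, by linarith [h]⟩
  | succ p ih =>
    intro q x y hx hy h
    cases q with
    | zero =>
      exfalso; apply hy
      rw [pow_zero, one_mul, pow_succ] at h
      exact ⟨2 ^ p * x, by linarith [h]⟩
    | succ q =>
      have h2 : 2 * (2 ^ p * x) = 2 * (2 ^ q * y) := by
        rw [pow_succ, pow_succ] at h; ring_nf at h ⊢; linarith [h]
      have := ih q x y hx hy (Nat.eq_of_mul_eq_mul_left (by norm_num) h2)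
      exact ⟨by omega, this.2⟩

lemma decomp (j : ℕ) : ∃ p b : ℕ, 1 ≤ b ∧ j + 1 = 2 ^ p * (2 * b - 1) := by
  obtain ⟨p, o, ho, h⟩ := Nat.exists_eq_pow_mul_and_not_dvd (Nat.succ_ne_zero j) 2 (by norm_num)
  refine ⟨p, (o + 1) / 2, by omega, ?_⟩
  have h2 : j + 1 = 2 ^ p * o := h
  rw [h2]; congr 1; omega

lemma sub_one_inj {a c : ℕ} (ha : 1 ≤ a) (hc : 1 ≤ c) (h : a - 1 = c - 1) : a = c := by omega

theorem recursive_boson_weighted_shift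
    (B Bs : (ℕ →₀ ℂ) →ₗ[ℂ] (ℕ →₀ ℂ))
    (hB : ∀ m n : ℕ, 1 ≤ m → 1 ≤ n →
      B (fsBasis (2 ^ m * (2 * n - 1))) =
        ((Real.sqrt m : ℝ) : ℂ) • fsBasis (2 ^ (m - 1) * (2 * n - 1)))
    (hB0 : ∀ n : ℕ, 1 ≤ n → B (fsBasis (2 * n - 1)) = 0)
    (hadj : ∀ x y : ℕ →₀ ℂ, fsInner (Bs x) y = fsInner x (B y)) :
    (∀ m n : ℕ, 1 ≤ m → 1 ≤ n →
      Bs (fsBasis (2 ^ (m - 1) * (2 * n - 1))) =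
        ((Real.sqrt m : ℝ) : ℂ) • fsBasis (2 ^ m * (2 * n - 1))) ∧
    (∀ x : ℕ →₀ ℂ, B (Bs x) - Bs (B x) = x) := by
  have hBs_apply : ∀ (x : ℕ →₀ ℂ) (j : ℕ),
      Bs x j = (starRingEnd ℂ) (fsInner x (B (fsBasis (j + 1)))) := by
    intro x j
    calc Bs x j = (starRingEnd ℂ) ((starRingEnd ℂ) (Bs x j)) := (Complex.conj_conj _).symm
      _ = (starRingEnd ℂ) (fsInner (Bs x) (Finsupp.single j 1)) := by
          rw [fsInner_single_right]
      _ = (starRingEnd ℂ) (fsInner x (B (fsBasis (j + 1)))) := by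
          rw [← fsBasis_succ, hadj]
  have hpos : ∀ a b : ℕ, 1 ≤ b → 1 ≤ 2 ^ a * (2 * b - 1) := by
    intro a b hb
    have h1 : 0 < 2 ^ a := Nat.pow_pos (by norm_num)
    have h2 : 0 < 2 * b - 1 := by omega
    exact Nat.mul_pos h1 h2
  have part1 : ∀ m n : ℕ, 1 ≤ m → 1 ≤ n →
      Bs (fsBasis (2 ^ (m - 1) * (2 * n - 1))) =
        ((Real.sqrt m : ℝ) : ℂ) • fsBasis (2 ^ m * (2 * n - 1)) := by
    intro m n hm hn
    ext j
    rw [hBs_apply]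
    obtain ⟨p, b, hb, hj⟩ := decomp j
    rw [hj]
    by_cases hp : p = 0
    · subst hp
      rw [pow_zero, one_mul] at hj ⊢
      rw [hB0 b hb, fsInner_zero_right, map_zero, Finsupp.smul_apply]
      have h0 : fsBasis (2 ^ m * (2 * n - 1)) j = 0 := by
        rw [fsBasis, Finsupp.single_apply, if_neg]
        intro hcontra
        have hM : 2 ^ m * (2 * n - 1) = j + 1 := by
          have := hpos m n hn; omega
        rw [hj] at hM
        have hMM : 2 ^ m * (2 * n - 1) = 2 ^ 0 * (2 * b - 1) := by
          rw [pow_zero, one_mul]; exact hM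
        have := two_pow_odd_uniq m 0 (2 * n - 1) (2 * b - 1)
          (by omega) (by omega) hMM
        omega
      rw [h0, smul_zero]
    · have hp1 : 1 ≤ p := by omega
      rw [hB p b hp1 hb, fsInner_smul_right]
      simp only [fsBasis]
      rw [fsInner_single_left, Finsupp.single_apply, Finsupp.smul_apply,
        Finsupp.single_apply]
      by_cases hcase : p = m ∧ b = n
      · obtain ⟨rfl, rfl⟩ := hcase
        rw [if_pos rfl, if_pos (by rw [← hj, Nat.add_sub_cancel])]
        simp [Complex.conj_ofReal]
      · have hL : 2 ^ (p - 1) * (2 * b - 1) - 1 ≠ 2 ^ (m - 1) * (2 * n - 1) - 1 := by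
          intro h
          have hLK := sub_one_inj (hpos _ _ hb) (hpos _ _ hn) h
          have := two_pow_odd_uniq (p - 1) (m - 1) (2 * b - 1) (2 * n - 1)
            (by omega) (by omega) hLK
          exact hcase ⟨by omega, by omega⟩
        have hM : 2 ^ m * (2 * n - 1) - 1 ≠ j := by
          intro h
          have hMj : 2 ^ m * (2 * n - 1) = j + 1 := by
            have := hpos m n hn; omega
          rw [hj] at hMj
          have := two_pow_odd_uniq m p (2 * n - 1) (2 * b - 1)
            (by omega) (by omega) hMj
          exact hcase ⟨by omega, by omega⟩
        rw [if_neg hL, if_neg hM]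
        simp
  refine ⟨part1, ?_⟩
  have key : ∀ m n : ℕ, 1 ≤ m → 1 ≤ n →
      B (Bs (fsBasis (2 ^ (m - 1) * (2 * n - 1)))) -
        Bs (B (fsBasis (2 ^ (m - 1) * (2 * n - 1)))) = fsBasis (2 ^ (m - 1) * (2 * n - 1)) := by
    intro m n hm hn
    have hBBs : B (Bs (fsBasis (2 ^ (m - 1) * (2 * n - 1)))) =
        ((m : ℝ) : ℂ) • fsBasis (2 ^ (m - 1) * (2 * n - 1)) := by
      rw [part1 m n hm hn, map_smul, hB m n hm hn, smul_smul]
      congr 1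
      rw [← Complex.ofReal_mul, Real.mul_self_sqrt (Nat.cast_nonneg m)]
    by_cases hm1 : m = 1
    · subst hm1
      have h0 : B (fsBasis (2 ^ (1 - 1) * (2 * n - 1))) = 0 := by
        have he : (2:ℕ) ^ (1 - 1) * (2 * n - 1) = 2 * n - 1 := by norm_num
        rw [he]; exact hB0 n hn
      rw [hBBs, h0, map_zero, sub_zero]
      norm_num
    · have hm2 : 2 ≤ m := by omega
      have hBsB : Bs (B (fsBasis (2 ^ (m - 1) * (2 * n - 1)))) =
          (((m - 1 : ℕ) : ℝ) : ℂ) • fsBasis (2 ^ (m - 1) * (2 * n - 1)) := by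
        rw [hB (m - 1) n (by omega) hn, map_smul, part1 (m - 1) n (by omega) hn, smul_smul]
        congr 1
        rw [← Complex.ofReal_mul, Real.mul_self_sqrt (Nat.cast_nonneg _)]
      rw [hBBs, hBsB, ← sub_smul]
      have hc : ((m : ℝ) : ℂ) - (((m - 1 : ℕ) : ℝ) : ℂ) = 1 := by
        push_cast [hm]
        ring
      rw [hc, one_smul]
  intro x
  induction x using Finsupp.induction_linear with
  | zero => simp
  | add f g hf hg => simp only [map_add]; rw [add_sub_add_comm, hf, hg]
  | single a c =>
    have hs : Finsupp.single a c = c • fsBasis (a + 1) := by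
      rw [fsBasis_succ, Finsupp.smul_single, smul_eq_mul, mul_one]
    rw [hs, map_smul, map_smul, map_smul, map_smul, ← smul_sub]
    obtain ⟨p, b, hb, hj⟩ := decomp a
    have hk := key (p + 1) b (by omega) hb
    rw [show (p + 1) - 1 = p from rfl] at hk
    rw [show a + 1 = 2 ^ p * (2 * b - 1) from hj, hk]
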